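/- arXiv:2009.13378 — 2 statements merged into one kernel-verified Lean document; each statement's English description precedes it below -/
import Mathlib

section
/- Let Φ be continuous, positive, T-periodic with mean Φ̄ and suppose σ̃ = Φ̄. Then every positive solution R of R'(t) = μ R(t)(Φ(t) P₀(R(t)) − σ̃/3) with μ > 0 satisfies lim_{t→∞} R(t) = 0. -/
open Real Set Filter

noncomputable def P0 (x : ℝ) : ℝ := (x * (Real.cosh x / Real.sinh x) - 1) / x ^ 2

lemma sinh_lt_mul_cosh {x : ℝ} (hx : 0 < x) : Real.sinh x < x * Real.cosh x := by
  have h : StrictMonoOn (fun y => y * Real.cosh y - Real.sinh y) (Set.Ici 0) := by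
    apply strictMonoOn_of_deriv_pos (convex_Ici 0)
    · exact ((continuous_id.mul Real.continuous_cosh).sub Real.continuous_sinh).continuousOn
    · intro y hy
      rw [interior_Ici] at hy
      have hd : HasDerivAt (fun y => y * Real.cosh y - Real.sinh y) (y * Real.sinh y) y := by
        have := ((hasDerivAt_id y).mul (Real.hasDerivAt_cosh y)).sub (Real.hasDerivAt_sinh y)
        refine this.congr_deriv ?_; simp only [id]; ring
      rw [hd.deriv]
      exact mul_pos hy (Real.sinh_pos_iff.mpr hy)
  have h0 := h Set.self_mem_Ici (Set.mem_Ici.mpr hx.le) hx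
  simpa using h0

lemma key_ineq {x : ℝ} (hx : 0 < x) :
    3 * (x * Real.cosh x - Real.sinh x) < x ^ 2 * Real.sinh x := by
  have h : StrictMonoOn
      (fun y => y ^ 2 * Real.sinh y - 3 * (y * Real.cosh y) + 3 * Real.sinh y) (Set.Ici 0) := by
    apply strictMonoOn_of_deriv_pos (convex_Ici 0)
    · exact (((continuous_pow 2).mul Real.continuous_sinh).sub
        (continuous_const.mul (continuous_id.mul Real.continuous_cosh))).add
        (continuous_const.mul Real.continuous_sinh) |>.continuousOn
    · intro y hy
      rw [interior_Ici] at hy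
      have hd : HasDerivAt
          (fun y => y ^ 2 * Real.sinh y - 3 * (y * Real.cosh y) + 3 * Real.sinh y)
          (y * (y * Real.cosh y - Real.sinh y)) y := by
        have := (((hasDerivAt_pow 2 y).mul (Real.hasDerivAt_sinh y)).sub
          ((hasDerivAt_const y 3).mul ((hasDerivAt_id y).mul (Real.hasDerivAt_cosh y)))).add
          ((hasDerivAt_const y 3).mul (Real.hasDerivAt_sinh y))
        refine this.congr_deriv ?_; simp only [id]; ring
      rw [hd.deriv]
      exact mul_pos hy (by linarith [sinh_lt_mul_cosh hy])
  have h0 := h Set.self_mem_Ici (Set.mem_Ici.mpr hx.le) hx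
  simp only [Real.sinh_zero, Real.cosh_zero] at h0
  nlinarith [h0]

lemma P0_lt_third {x : ℝ} (hx : 0 < x) : P0 x < 1 / 3 := by
  have hs := Real.sinh_pos_iff.mpr hx
  have hxx : (0:ℝ) < x ^ 2 := by positivity
  have hrw : P0 x = (x * Real.cosh x - Real.sinh x) / (Real.sinh x * x ^ 2) := by
    unfold P0; field_simp
  rw [hrw, div_lt_iff₀ (by positivity)]
  nlinarith [key_ineq hx]

lemma P0_contOn {δ Δ : ℝ} (hδ : 0 < δ) : ContinuousOn P0 (Set.Icc δ Δ) := by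
  have hs : ∀ x ∈ Set.Icc δ Δ, Real.sinh x ≠ 0 :=
    fun x hx => (Real.sinh_pos_iff.mpr (hδ.trans_le hx.1)).ne'
  apply ContinuousOn.div
  · exact (continuousOn_id.mul
      (Real.continuous_cosh.continuousOn.div Real.continuous_sinh.continuousOn hs)).sub
      continuousOn_const
  · exact (continuous_pow 2).continuousOn
  · intro x hx
    have : (0:ℝ) < x := hδ.trans_le hx.1
    positivity
theorem R_tendsto_zero
    (T : ℝ) (hT : 0 < T) (Φ : ℝ → ℝ) (hΦc : Continuous Φ)
    (hΦpos : ∀ t, 0 < Φ t) (hΦper : ∀ t, Φ (t + T) = Φ t)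
    (μ σ : ℝ) (hμ : 0 < μ)
    (hmean : σ = (1 / T) * ∫ t in (0 : ℝ)..T, Φ t)
    (R : ℝ → ℝ) (hRpos : ∀ t, 0 ≤ t → 0 < R t)
    (hODE : ∀ t, 0 ≤ t → HasDerivAt R (μ * R t * (Φ t * P0 (R t) - σ / 3)) t) :
    Filter.Tendsto R Filter.atTop (nhds 0) := by
  classical
  have hper : Function.Periodic Φ T := hΦper
  -- minimum of Φ
  obtain ⟨a, _, hmin⟩ := isCompact_Icc.exists_isMinOn (Set.nonempty_Icc.mpr hT.le)
    (hΦc.continuousOn (s := Set.Icc 0 T))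
  set m := Φ a with hm_def
  have hm : 0 < m := hΦpos a
  have hΦge : ∀ t, m ≤ Φ t := by
    intro t
    obtain ⟨y, hy, hxy⟩ := hper.exists_mem_Ico₀ hT t
    rw [hxy]; exact hmin ⟨hy.1, hy.2.le⟩
  -- integral of Φ over a period
  have hI : (∫ t in (0:ℝ)..T, Φ t) = σ * T := by
    rw [hmean]; field_simp
  -- the primitive F of Φ - σ
  set g : ℝ → ℝ := fun t => Φ t - σ with hg_def
  have hg : Continuous g := hΦc.sub continuous_const
  set F : ℝ → ℝ := fun t => ∫ s in (0:ℝ)..t, g s with hF_def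
  have hF : ∀ t : ℝ, HasDerivAt F (g t) t := fun t =>
    (hg.integral_hasStrictDerivAt 0 t).hasDerivAt
  have hFc : Continuous F := by
    rw [continuous_iff_continuousAt]; exact fun t => (hF t).continuousAt
  have hgper : Function.Periodic g T := by
    intro t; simp only [hg_def, hΦper t]
  have hg0 : (∫ s in (0:ℝ)..T, g s) = 0 := by
    rw [hg_def, intervalIntegral.integral_sub (hΦc.intervalIntegrable _ _)
      (intervalIntegrable_const), hI]
    simp
    ring
  have hFper : Function.Periodic F T := by
    intro t
    have h1 : F t + ∫ s in t..t+T, g s = F (t + T) :=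
      intervalIntegral.integral_add_adjacent_intervals
        (hg.intervalIntegrable 0 t) (hg.intervalIntegrable t (t+T))
    have h2 : (∫ s in t..t+T, g s) = ∫ s in (0:ℝ)..(0+T), g s :=
      hgper.intervalIntegral_add_eq t 0
    rw [zero_add, hg0] at h2
    rw [← h1, h2, add_zero]
  -- bound on |F|
  obtain ⟨b, _, hmax⟩ := isCompact_Icc.exists_isMaxOn (Set.nonempty_Icc.mpr hT.le)
    (hFc.abs.continuousOn (s := Set.Icc 0 T))
  set B := |F b| with hB_def
  have hFB : ∀ t, |F t| ≤ B := by
    intro t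
    have habs : Function.Periodic (fun t => |F t|) T := fun t => by simp [hFper t]
    obtain ⟨y, hy, hxy⟩ := habs.exists_mem_Ico₀ hT t
    rw [hxy]; exact hmax ⟨hy.1, hy.2.le⟩
  -- the Lyapunov function V
  set V : ℝ → ℝ := fun t => Real.log (R t) - (μ/3) * F t with hV_def
  have hV : ∀ t, 0 ≤ t → HasDerivAt V (μ * Φ t * (P0 (R t) - 1/3)) t := by
    intro t ht
    have hR0 : R t ≠ 0 := (hRpos t ht).ne'
    have h1 : HasDerivAt (fun t => Real.log (R t))
        ((μ * R t * (Φ t * P0 (R t) - σ/3)) / R t) t := (hODE t ht).log hR0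
    have h2 := (hF t).const_mul (μ/3)
    have h3 := h1.sub h2
    refine h3.congr_deriv ?_
    rw [hg_def]
    field_simp
    ring
  have hVanti : StrictAntiOn V (Set.Ici 0) := by
    apply strictAntiOn_of_deriv_neg (convex_Ici 0)
    · intro t ht; exact (hV t ht).continuousAt.continuousWithinAt
    · intro t ht
      rw [interior_Ici] at ht
      rw [(hV t ht.le).deriv]
      have hp : P0 (R t) - 1/3 < 0 := sub_neg.mpr (P0_lt_third (hRpos t ht.le))
      have : 0 < μ * Φ t := mul_pos hμ (hΦpos t)
      exact mul_neg_of_pos_of_neg this hp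
  -- R in terms of V
  have hRe : ∀ t, 0 ≤ t → R t = Real.exp (V t + (μ/3) * F t) := by
    intro t ht
    rw [hV_def]
    simp only [sub_add_cancel]
    rw [Real.exp_log (hRpos t ht)]
  clear_value V B F g m
  by_cases hbdd : BddBelow (V '' Set.Ici 0)
  · -- bounded below: contradiction
    exfalso
    obtain ⟨L, hL⟩ := hbdd
    have hLle : ∀ t, 0 ≤ t → L ≤ V t := fun t ht => hL (Set.mem_image_of_mem V ht)
    have hVle : ∀ t, 0 ≤ t → V t ≤ V 0 := by
      intro t ht
      rcases eq_or_lt_of_le ht with h | h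
      · rw [← h]
      · exact (hVanti Set.self_mem_Ici ht h).le
    -- R is trapped in a compact interval [δ, Δ]
    set δ := Real.exp (L - (μ/3) * B) with hδ_def
    set Δ := Real.exp (V 0 + (μ/3) * B) with hΔ_def
    have hδpos : 0 < δ := Real.exp_pos _
    have hμ3 : (0:ℝ) ≤ μ/3 := by linarith
    have hμ3B : ∀ t, -( (μ/3) * B) ≤ (μ/3) * F t ∧ (μ/3) * F t ≤ (μ/3) * B := by
      intro t
      have h2 := abs_le.mp (hFB t)
      constructor
      · have := mul_le_mul_of_nonneg_left h2.1 hμ3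
        linarith
      · exact mul_le_mul_of_nonneg_left h2.2 hμ3
    have hRmem : ∀ t, 0 ≤ t → R t ∈ Set.Icc δ Δ := by
      intro t ht
      rw [hRe t ht]
      constructor
      · apply Real.exp_le_exp.mpr
        have h1 := (hμ3B t).1
        have h2 := hLle t ht
        linarith
      · apply Real.exp_le_exp.mpr
        have h1 := (hμ3B t).2
        have h2 := hVle t ht
        linarith
    -- max of P0 on [δ, Δ]
    obtain ⟨x₀, hx₀, hc⟩ := isCompact_Icc.exists_isMaxOn ⟨R 0, hRmem 0 le_rfl⟩
      (P0_contOn hδpos)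
    have hc13 : P0 x₀ < 1/3 := P0_lt_third (hδpos.trans_le hx₀.1)
    set k := μ * m * (1/3 - P0 x₀) with hk_def
    have hk : 0 < k := by
      apply mul_pos (mul_pos hμ hm); linarith
    -- W = V + k t is antitone
    have hWanti : AntitoneOn (fun t => V t + k * t) (Set.Ici 0) := by
      apply antitoneOn_of_deriv_nonpos (convex_Ici 0)
      · intro t ht
        have hd : HasDerivAt (fun t => V t + k * t) (μ * Φ t * (P0 (R t) - 1/3) + k) t := by
          have := (hV t ht).add ((hasDerivAt_id t).const_mul k)
          simp only [mul_one] at this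
          exact this
        exact hd.continuousAt.continuousWithinAt
      · intro t ht
        rw [interior_Ici] at ht
        have hd : HasDerivAt (fun t => V t + k * t) (μ * Φ t * (P0 (R t) - 1/3) + k) t := by
          have := (hV t ht.le).add ((hasDerivAt_id t).const_mul k)
          simp only [mul_one] at this
          exact this
        exact hd.differentiableAt.differentiableWithinAt
      · intro t ht
        rw [interior_Ici] at ht
        have hd : HasDerivAt (fun t => V t + k * t) (μ * Φ t * (P0 (R t) - 1/3) + k) t := by
          have := (hV t ht.le).add ((hasDerivAt_id t).const_mul k)
          simp only [mul_one] at this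
          exact this
        rw [hd.deriv]
        have hP : P0 (R t) ≤ P0 x₀ := hc (hRmem t ht.le)
        have h1 : μ * Φ t * (P0 (R t) - 1/3) ≤ μ * m * (P0 (R t) - 1/3) := by
          have hneg : P0 (R t) - 1/3 ≤ 0 := by
            linarith [P0_lt_third (hRpos t ht.le)]
          have hkey : 0 ≤ μ * ((Φ t - m) * (1/3 - P0 (R t))) :=
            mul_nonneg hμ.le (mul_nonneg (sub_nonneg.mpr (hΦge t)) (by linarith))
          nlinarith [hkey]
        have h2 : μ * m * (P0 (R t) - 1/3) ≤ μ * m * (P0 x₀ - 1/3) := by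
          have := mul_pos hμ hm; nlinarith
        rw [hk_def]
        linarith
    -- derive contradiction with lower bound
    set t₁ := max 0 ((V 0 - L)/k + 1) with ht₁_def
    have ht₁0 : (0:ℝ) ≤ t₁ := le_max_left _ _
    have hw := hWanti Set.self_mem_Ici (Set.mem_Ici.mpr ht₁0) ht₁0
    simp only [mul_zero, add_zero] at hw
    have hkt : V 0 - L + k ≤ k * t₁ := by
      have h1 : (V 0 - L)/k + 1 ≤ t₁ := le_max_right _ _
      calc V 0 - L + k = k * ((V 0 - L)/k + 1) := by field_simp
        _ ≤ k * t₁ := by nlinarith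
    have := hLle t₁ ht₁0
    linarith
  · -- not bounded below: V → -∞ hence R → 0
    have hVbot : Filter.Tendsto V Filter.atTop Filter.atBot := by
      rw [Filter.tendsto_atBot]
      intro c
      rw [not_bddBelow_iff] at hbdd
      obtain ⟨v, hv, hvc⟩ := hbdd c
      obtain ⟨t₀, ht₀, rfl⟩ := hv
      filter_upwards [Filter.eventually_gt_atTop t₀] with t ht
      exact (hVanti ht₀ (Set.mem_Ici.mpr (ht₀.trans ht.le)) ht).le.trans hvc.le
    have hlogbot : Filter.Tendsto (fun t => V t + (μ/3) * B) Filter.atTop Filter.atBot :=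
      Filter.tendsto_atBot_add_const_right _ _ hVbot
    have hexp : Filter.Tendsto (fun t => Real.exp (V t + (μ/3) * B)) Filter.atTop (nhds 0) :=
      Real.tendsto_exp_atBot.comp hlogbot
    apply squeeze_zero' (g := fun t => Real.exp (V t + (μ/3) * B)) ?_ ?_ hexp
    · filter_upwards [Filter.eventually_ge_atTop (0:ℝ)] with t ht
      exact (hRpos t ht).le
    · filter_upwards [Filter.eventually_ge_atTop (0:ℝ)] with t ht
      rw [hRe t ht]
      apply Real.exp_le_exp.mpr
      have := (abs_le.mp (hFB t)).2
      have hμ3 : 0 ≤ μ/3 := by linarith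
      nlinarith
end

section
/- Let Φ be continuous, positive, T-periodic with mean Φ̄, 0 < σ̃ < Φ̄, μ > 0, Φ* = max Φ, and let x̄ = P₀⁻¹(σ̃/(3Φ̄))·e^{−μ(Φ*−σ̃)T/3}. If R̄ solves R̄'(t) = μ R̄(t)(Φ(t) P₀(R̄(t)) − σ̃/3) with R̄(0) = x̄, then R̄(T) ≥ x̄. -/
/-- If `f 0 = 0` and `f' ≥ 0` on `[0,∞)`, then `f ≥ 0` on `[0,∞)`. -/
lemma aux_nonneg {f f' : ℝ → ℝ} (h0 : f 0 = 0)
    (hd : ∀ x, 0 ≤ x → HasDerivAt f (f' x) x)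
    (hd' : ∀ x, 0 ≤ x → 0 ≤ f' x) : ∀ x, 0 ≤ x → 0 ≤ f x := by
  have hmono : MonotoneOn f (Set.Ici 0) := by
    apply monotoneOn_of_hasDerivWithinAt_nonneg (convex_Ici 0)
      (fun x hx => ((hd x hx).continuousAt).continuousWithinAt)
    · intro x hx
      rw [interior_Ici] at hx
      exact (hd x (le_of_lt hx)).hasDerivWithinAt
    · intro x hx
      rw [interior_Ici] at hx
      exact hd' x (le_of_lt hx)
  intro x hx
  have := hmono (Set.mem_Ici.2 le_rfl) (Set.mem_Ici.2 hx) hx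
  rwa [h0] at this

lemma sinh_le_mul_cosh : ∀ x : ℝ, 0 ≤ x → Real.sinh x ≤ x * Real.cosh x := by
  have h : ∀ x : ℝ, 0 ≤ x → 0 ≤ x * Real.cosh x - Real.sinh x := by
    apply aux_nonneg (f' := fun x => x * Real.sinh x)
    · simp
    · intro x _
      have h1 : HasDerivAt (fun y : ℝ => y * Real.cosh y)
          (1 * Real.cosh x + x * Real.sinh x) x :=
        (hasDerivAt_id x).mul (Real.hasDerivAt_cosh x)
      have h2 := h1.sub (Real.hasDerivAt_sinh x)
      exact h2.congr_deriv (by ring)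
    · intro x hx
      exact mul_nonneg hx (Real.sinh_nonneg_iff.2 hx)
  intro x hx
  linarith [h x hx]

lemma key_ineq1 : ∀ x : ℝ, 0 ≤ x →
    3 * x * Real.cosh x ≤ (3 + x ^ 2) * Real.sinh x := by
  have h : ∀ x : ℝ, 0 ≤ x →
      0 ≤ (3 + x ^ 2) * Real.sinh x - 3 * x * Real.cosh x := by
    apply aux_nonneg (f' := fun x => x * (x * Real.cosh x - Real.sinh x))
    · simp
    · intro x _
      have h1 : HasDerivAt (fun y : ℝ => (3 + y ^ 2) * Real.sinh y)
          ((0 + 2 * x ^ 1) * Real.sinh x + (3 + x ^ 2) * Real.cosh x) x :=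
        ((hasDerivAt_const x (3:ℝ)).add (hasDerivAt_pow 2 x)).mul (Real.hasDerivAt_sinh x)
      have h2 : HasDerivAt (fun y : ℝ => 3 * y * Real.cosh y)
          (3 * Real.cosh x + 3 * x * Real.sinh x) x := by
        have := (((hasDerivAt_id x).const_mul (3:ℝ)).mul (Real.hasDerivAt_cosh x))
        exact this.congr_deriv (by simp only [id]; ring)
      exact (h1.sub h2).congr_deriv (by ring)
    · intro x hx
      exact mul_nonneg hx (by linarith [sinh_le_mul_cosh x hx])
  intro x hx
  linarith [h x hx]

lemma P0_le_third {x : ℝ} (hx : 0 < x) : P0 x ≤ 1 / 3 := by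
  have hs : 0 < Real.sinh x := Real.sinh_pos_iff.2 hx
  have hk := key_ineq1 x hx.le
  rw [P0, div_le_iff₀ (pow_pos hx 2)]
  rw [show x * (Real.cosh x / Real.sinh x) = x * Real.cosh x / Real.sinh x by ring,
    sub_le_iff_le_add, div_le_iff₀ hs]
  nlinarith

lemma key_ineq2 : ∀ x : ℝ, 0 ≤ x →
    2 * Real.sinh x ^ 2 ≤ x * Real.sinh x * Real.cosh x + x ^ 2 := by
  have hstep : ∀ x : ℝ, 0 ≤ x →
      0 ≤ x * Real.cosh x ^ 2 + x * Real.sinh x ^ 2 + 2 * x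
        - 3 * Real.sinh x * Real.cosh x := by
    apply aux_nonneg
      (f' := fun x => Real.cosh x ^ 2 + Real.sinh x ^ 2
        + 4 * x * Real.sinh x * Real.cosh x + 2
        - 3 * (Real.cosh x ^ 2 + Real.sinh x ^ 2))
    · simp
    · intro x _
      have hc := Real.hasDerivAt_cosh x
      have hsi := Real.hasDerivAt_sinh x
      have h1 : HasDerivAt (fun y : ℝ => y * Real.cosh y ^ 2)
          (1 * Real.cosh x ^ 2 + x * (2 * Real.cosh x ^ 1 * Real.sinh x)) x :=
        (hasDerivAt_id x).mul (hc.pow 2)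
      have h2 : HasDerivAt (fun y : ℝ => y * Real.sinh y ^ 2)
          (1 * Real.sinh x ^ 2 + x * (2 * Real.sinh x ^ 1 * Real.cosh x)) x :=
        (hasDerivAt_id x).mul (hsi.pow 2)
      have h3 : HasDerivAt (fun y : ℝ => 2 * y) (2 : ℝ) x := by
        simpa using (hasDerivAt_id x).const_mul (2:ℝ)
      have h4 : HasDerivAt (fun y : ℝ => 3 * Real.sinh y * Real.cosh y)
          (3 * Real.cosh x * Real.cosh x + 3 * Real.sinh x * Real.sinh x) x := by
        have := ((hsi.const_mul (3:ℝ)).mul hc)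
        exact this.congr_deriv (by ring)
      exact (((h1.add h2).add h3).sub h4).congr_deriv (by ring)
    · intro x hx
      have h1 := sinh_le_mul_cosh x hx
      have h2 : 0 ≤ Real.sinh x := Real.sinh_nonneg_iff.2 hx
      have h3 := Real.cosh_sq_sub_sinh_sq x
      nlinarith [mul_nonneg h2 (sub_nonneg.2 h1)]
  have h : ∀ x : ℝ, 0 ≤ x →
      0 ≤ x * Real.sinh x * Real.cosh x + x ^ 2 - 2 * Real.sinh x ^ 2 := by
    apply aux_nonneg
      (f' := fun x => x * Real.cosh x ^ 2 + x * Real.sinh x ^ 2 + 2 * x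
        - 3 * Real.sinh x * Real.cosh x)
    · simp
    · intro x _
      have hc := Real.hasDerivAt_cosh x
      have hsi := Real.hasDerivAt_sinh x
      have h1 : HasDerivAt (fun y : ℝ => y * Real.sinh y * Real.cosh y)
          ((1 * Real.sinh x + x * Real.cosh x) * Real.cosh x
            + x * Real.sinh x * Real.sinh x) x :=
        ((hasDerivAt_id x).mul hsi).mul hc
      have h2 : HasDerivAt (fun y : ℝ => y ^ 2) (2 * x ^ 1) x := hasDerivAt_pow 2 x
      have h3 : HasDerivAt (fun y : ℝ => 2 * Real.sinh y ^ 2)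
          (2 * (2 * Real.sinh x ^ 1 * Real.cosh x)) x :=
        (hsi.pow 2).const_mul 2
      exact ((h1.add h2).sub h3).congr_deriv (by ring)
    · exact hstep
  intro x hx
  linarith [h x hx]

lemma hasDerivAt_P0 {x : ℝ} (hx : 0 < x) :
    HasDerivAt P0 ((2 - x * (Real.cosh x / Real.sinh x)
      - x ^ 2 / Real.sinh x ^ 2) / x ^ 3) x := by
  have hs : 0 < Real.sinh x := Real.sinh_pos_iff.2 hx
  have hc := Real.hasDerivAt_cosh x
  have hsi := Real.hasDerivAt_sinh x
  have hdiv : HasDerivAt (fun y : ℝ => Real.cosh y / Real.sinh y)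
      ((Real.sinh x * Real.sinh x - Real.cosh x * Real.cosh x) / Real.sinh x ^ 2) x :=
    hc.div hsi hs.ne'
  have hnum : HasDerivAt (fun y : ℝ => y * (Real.cosh y / Real.sinh y) - 1)
      (1 * (Real.cosh x / Real.sinh x)
        + x * ((Real.sinh x * Real.sinh x - Real.cosh x * Real.cosh x) / Real.sinh x ^ 2)) x :=
    (((hasDerivAt_id x).mul hdiv).sub_const 1)
  have hden : HasDerivAt (fun y : ℝ => y ^ 2) (2 * x ^ 1) x := hasDerivAt_pow 2 x
  have h := hnum.div hden (pow_pos hx 2).ne'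
  have h4 : Real.cosh x * Real.cosh x = Real.sinh x * Real.sinh x + 1 := by
    nlinarith [Real.cosh_sq_sub_sinh_sq x]
  have heq : ((1 * (Real.cosh x / Real.sinh x)
        + x * ((Real.sinh x * Real.sinh x - Real.cosh x * Real.cosh x) / Real.sinh x ^ 2))
        * x ^ 2 - (x * (Real.cosh x / Real.sinh x) - 1) * (2 * x ^ 1)) / (x ^ 2) ^ 2
      = (2 - x * (Real.cosh x / Real.sinh x) - x ^ 2 / Real.sinh x ^ 2) / x ^ 3 := by
    rw [h4]
    field_simp
    ring
  rw [heq] at h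
  exact h

lemma P0_antitoneOn : AntitoneOn P0 (Set.Ioi 0) := by
  apply antitoneOn_of_deriv_nonpos (convex_Ioi 0)
  · exact fun x hx => (hasDerivAt_P0 hx).continuousAt.continuousWithinAt
  · intro x hx
    rw [interior_Ioi] at hx
    exact (hasDerivAt_P0 hx).differentiableAt.differentiableWithinAt
  · intro x hx
    rw [interior_Ioi] at hx
    rw [(hasDerivAt_P0 hx).deriv]
    have hs : 0 < Real.sinh x := Real.sinh_pos_iff.2 hx
    have hk := key_ineq2 x hx.le
    apply div_nonpos_of_nonpos_of_nonneg _ (pow_pos hx 3).le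
    have heq : 2 - x * (Real.cosh x / Real.sinh x) - x ^ 2 / Real.sinh x ^ 2
        = (2 * Real.sinh x ^ 2 - x * Real.sinh x * Real.cosh x - x ^ 2) / Real.sinh x ^ 2 := by
      field_simp
    rw [heq]
    apply div_nonpos_of_nonpos_of_nonneg (by linarith) (by positivity)

theorem lower_barrier
    (T : ℝ) (hT : 0 < T) (Φ : ℝ → ℝ) (hΦc : Continuous Φ)
    (hΦpos : ∀ t, 0 < Φ t) (hΦper : ∀ t, Φ (t + T) = Φ t)
    (μ σ : ℝ) (hμ : 0 < μ) (hσ : 0 < σ)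
    (Φbar : ℝ) (hΦbar : Φbar = (1 / T) * ∫ t in (0 : ℝ)..T, Φ t)
    (hσlt : σ < Φbar)
    (Φstar : ℝ) (hΦstar : IsGreatest (Φ '' Set.Icc 0 T) Φstar)
    (z : ℝ) (hzpos : 0 < z) (hz : P0 z = σ / (3 * Φbar))
    (xbar : ℝ) (hxbar : xbar = z * Real.exp (-(μ * (Φstar - σ) / 3 * T)))
    (R : ℝ → ℝ) (hRpos : ∀ t, 0 ≤ t → 0 < R t)
    (hODE : ∀ t, 0 ≤ t → HasDerivAt R (μ * R t * (Φ t * P0 (R t) - σ / 3)) t)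
    (hR0 : R 0 = xbar) :
    R T ≥ xbar := by
  have hΦbarpos : 0 < Φbar := hσ.trans hσlt
  have hxbarpos : 0 < xbar := by rw [hxbar]; positivity
  have hintΦ : (∫ t in (0 : ℝ)..T, Φ t) = Φbar * T := by
    rw [hΦbar]; field_simp
  have hΦleStar : ∀ t ∈ Set.Icc (0:ℝ) T, Φ t ≤ Φstar := fun t ht => hΦstar.2 ⟨t, ht, rfl⟩
  have hbarleStar : Φbar ≤ Φstar := by
    have h1 : (∫ t in (0 : ℝ)..T, Φ t) ≤ ∫ _t in (0 : ℝ)..T, Φstar := by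
      apply intervalIntegral.integral_mono_on hT.le
        (hΦc.intervalIntegrable 0 T) (intervalIntegrable_const) hΦleStar
    rw [hintΦ, intervalIntegral.integral_const, smul_eq_mul, sub_zero] at h1
    nlinarith
  set c : ℝ := μ * (Φstar - σ) / 3 with hc_def
  have hc : 0 ≤ c := by
    have : 0 ≤ Φstar - σ := by linarith
    positivity
  -- derivative of the auxiliary function h t = R t * exp (-(c*t))
  have hexp : ∀ t : ℝ, HasDerivAt (fun s => Real.exp (-(c * s)))
      (Real.exp (-(c * t)) * (-c)) t := by
    intro t
    have h1 : HasDerivAt (fun s : ℝ => -(c * s)) (-c) t := by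
      exact ((hasDerivAt_id t).const_mul c).neg.congr_deriv (by simp)
    exact h1.exp
  have hhder : ∀ t, 0 ≤ t → HasDerivAt (fun s => R s * Real.exp (-(c * s)))
      ((μ * R t * (Φ t * P0 (R t) - σ / 3)) * Real.exp (-(c * t))
        + R t * (Real.exp (-(c * t)) * (-c))) t :=
    fun t ht => (hODE t ht).mul (hexp t)
  -- Step 1: h is antitone on [0, T]
  have hanti : AntitoneOn (fun s => R s * Real.exp (-(c * s))) (Set.Icc 0 T) := by
    apply antitoneOn_of_deriv_nonpos (convex_Icc 0 T)
    · exact fun t ht => (hhder t ht.1).continuousAt.continuousWithinAt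
    · intro t ht
      rw [interior_Icc] at ht
      exact (hhder t ht.1.le).differentiableAt.differentiableWithinAt
    · intro t ht
      rw [interior_Icc] at ht
      rw [(hhder t ht.1.le).deriv]
      have hR := hRpos t ht.1.le
      have hP := P0_le_third hR
      have hΦt := hΦpos t
      have hΦs := hΦleStar t ⟨ht.1.le, ht.2.le⟩
      have hkey : Φ t * P0 (R t) - σ / 3 ≤ (Φstar - σ) / 3 := by nlinarith
      have hE : 0 < Real.exp (-(c * t)) := Real.exp_pos _
      have hfac : 0 ≤ R t * Real.exp (-(c * t)) * μ * ((Φstar - σ) / 3 - (Φ t * P0 (R t) - σ / 3)) :=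
        mul_nonneg (mul_nonneg (mul_nonneg hR.le hE.le) hμ.le) (by linarith)
      rw [hc_def]
      nlinarith
  -- R t ≤ z on [0, T]
  have hRlez : ∀ t ∈ Set.Icc (0:ℝ) T, R t ≤ z := by
    intro t ht
    have h0mem : (0:ℝ) ∈ Set.Icc (0:ℝ) T := ⟨le_rfl, hT.le⟩
    have h1 := hanti h0mem ht ht.1
    simp only [mul_zero, neg_zero, Real.exp_zero, mul_one, hR0] at h1
    -- h1 : R t * exp (-(c*t)) ≤ xbar
    have h2 : R t ≤ xbar * Real.exp (c * t) := by
      calc R t = R t * Real.exp (-(c * t)) * Real.exp (c * t) := by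
            rw [mul_assoc, ← Real.exp_add]; simp
        _ ≤ xbar * Real.exp (c * t) := by
            apply mul_le_mul_of_nonneg_right h1 (Real.exp_pos _).le
    have h3 : xbar * Real.exp (c * t) ≤ xbar * Real.exp (c * T) := by
      apply mul_le_mul_of_nonneg_left _ hxbarpos.le
      exact Real.exp_le_exp.2 (mul_le_mul_of_nonneg_left ht.2 hc)
    have h4 : xbar * Real.exp (c * T) = z := by
      rw [hxbar, hc_def, mul_assoc, ← Real.exp_add]
      simp
    linarith
  -- Step 2: P0 (R t) ≥ σ / (3 * Φbar) on [0, T]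
  have hP0ge : ∀ t ∈ Set.Icc (0:ℝ) T, σ / (3 * Φbar) ≤ P0 (R t) := by
    intro t ht
    rw [← hz]
    exact P0_antitoneOn (Set.mem_Ioi.2 (hRpos t ht.1)) (Set.mem_Ioi.2 hzpos) (hRlez t ht)
  -- Step 3: monotone auxiliary function G
  set G : ℝ → ℝ := fun t => Real.log (R t)
    - μ * σ / (3 * Φbar) * (∫ s in (0:ℝ)..t, Φ s) + μ * σ / 3 * t with hG_def
  have hGder : ∀ t, 0 ≤ t → HasDerivAt G
      (μ * (Φ t * P0 (R t) - σ / 3) - μ * σ / (3 * Φbar) * Φ t + μ * σ / 3) t := by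
    intro t ht
    have hR := hRpos t ht
    have hlog : HasDerivAt (fun s => Real.log (R s))
        ((μ * R t * (Φ t * P0 (R t) - σ / 3)) / R t) t := (hODE t ht).log hR.ne'
    have hlog' : HasDerivAt (fun s => Real.log (R s))
        (μ * (Φ t * P0 (R t) - σ / 3)) t := by
      convert hlog using 1
      field_simp
    have hFTC : HasDerivAt (fun u => ∫ s in (0:ℝ)..u, Φ s) (Φ t) t :=
      intervalIntegral.integral_hasDerivAt_right (hΦc.intervalIntegrable 0 t)
        (hΦc.stronglyMeasurable.stronglyMeasurableAtFilter) hΦc.continuousAt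
    have hlin : HasDerivAt (fun s : ℝ => μ * σ / 3 * s) (μ * σ / 3) t := by
      simpa using (hasDerivAt_id t).const_mul (μ * σ / 3)
    exact (hlog'.sub (hFTC.const_mul (μ * σ / (3 * Φbar)))).add hlin
  have hmono : MonotoneOn G (Set.Icc 0 T) := by
    apply monotoneOn_of_deriv_nonneg (convex_Icc 0 T)
    · exact fun t ht => (hGder t ht.1).continuousAt.continuousWithinAt
    · intro t ht
      rw [interior_Icc] at ht
      exact (hGder t ht.1.le).differentiableAt.differentiableWithinAt
    · intro t ht
      rw [interior_Icc] at ht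
      rw [(hGder t ht.1.le).deriv]
      have h1 := hP0ge t ⟨ht.1.le, ht.2.le⟩
      have h2 := hΦpos t
      have h3 : 0 ≤ μ * Φ t * (P0 (R t) - σ / (3 * Φbar)) :=
        mul_nonneg (mul_nonneg hμ.le h2.le) (by linarith)
      have h4 : μ * (Φ t * P0 (R t) - σ / 3) - μ * σ / (3 * Φbar) * Φ t + μ * σ / 3
          = μ * Φ t * (P0 (R t) - σ / (3 * Φbar)) := by ring
      linarith [h4 ▸ h3]
  have hGT := hmono ⟨le_rfl, hT.le⟩ ⟨hT.le, le_rfl⟩ hT.le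
  have hG0 : G 0 = Real.log xbar := by
    simp [hG_def, hR0]
  have hGTv : G T = Real.log (R T) := by
    rw [hG_def]
    simp only []
    rw [hintΦ]
    field_simp
    ring
  rw [hG0, hGTv] at hGT
  exact (Real.log_le_log_iff hxbarpos (hRpos T hT.le)).1 hGT
end
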